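/- Let e₁, e₂, e₃ ∈ ℝ² satisfy e₁ + e₂ + e₃ = 0 with e₁ and e₂ linearly independent, and let S̄ = (s̄₁,s̄₂,s̄₃) ∈ ℝ³ with all s̄ᵢ > 0. Then s_D(e) = S̄ᵀ D r(e) = ‖R(e)ᵀ S̄‖² > 0. -/

import Mathlib

open Matrix

noncomputable section

/-- The plane `ℝ²` with the Euclidean norm. -/
abbrev E2 := EuclideanSpace ℝ (Fin 2)

/-- Oriented incidence matrix of the triangle graph. -/
def Hmat : Matrix (Fin 3) (Fin 3) ℝ := !![-1, 1, 0; 0, -1, 1; 1, 0, -1]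

/-- Expanded incidence matrix `Ĥ = H ⊗ I₂`. -/
def Hhat : Matrix (Fin 3 × Fin 2) (Fin 3 × Fin 2) ℝ :=
  Matrix.kroneckerMap (· * ·) Hmat (1 : Matrix (Fin 2) (Fin 2) ℝ)

/-- `Λ(e) ∈ ℝ^{6×3}`: block-diagonal matrix with `2×1` blocks `e₁, e₂, e₃`. -/
def Lam (e : Fin 3 → E2) : Matrix (Fin 3 × Fin 2) (Fin 3) ℝ :=
  fun p j => if p.1 = j then e j p.2 else 0

/-- The rigidity matrix `R(e) = Λ(e)ᵀ Ĥ ∈ ℝ^{3×6}`. -/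
def Rmat (e : Fin 3 → E2) : Matrix (Fin 3) (Fin 3 × Fin 2) ℝ := (Lam e)ᵀ * Hhat

/-- The rigidity function `r(e)ᵢ = ½‖eᵢ‖²`. -/
def rvec (e : Fin 3 → E2) : Fin 3 → ℝ := fun i => (1 / 2) * ‖e i‖ ^ 2

/-- The matrix `D` built from the desired shape `S̄ = (s̄₁, s̄₂, s̄₃)`. -/
def Dmat (sb : Fin 3 → ℝ) : Matrix (Fin 3) (Fin 3) ℝ :=
  !![4 * sb 0 + sb 1 + sb 2, sb 1 - sb 2, sb 2 - sb 1;
     sb 0 - sb 2, sb 0 + 4 * sb 1 + sb 2, sb 2 - sb 0;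
     sb 0 - sb 1, sb 1 - sb 0, sb 0 + sb 1 + 4 * sb 2]

/-- `s_N(e) = r(e)ᵀ D r(e)`. -/
def sN (sb : Fin 3 → ℝ) (e : Fin 3 → E2) : ℝ := rvec e ⬝ᵥ (Dmat sb *ᵥ rvec e)

/-- `s_D(e) = S̄ᵀ D r(e)`. -/
def sD (sb : Fin 3 → ℝ) (e : Fin 3 → E2) : ℝ := sb ⬝ᵥ (Dmat sb *ᵥ rvec e)

/-- The time-varying scale function `s̃*(e) = s_N(e)/s_D(e)`. -/
def stilde (sb : Fin 3 → ℝ) (e : Fin 3 → E2) : ℝ := sN sb e / sD sb e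

/-- The instantaneous cost `‖R(e)ᵀ (r(e) − θ S̄)‖²` at scale `θ`. -/
def cost (sb : Fin 3 → ℝ) (e : Fin 3 → E2) (θ : ℝ) : ℝ :=
  ((Rmat e)ᵀ *ᵥ (rvec e - θ • sb)) ⬝ᵥ ((Rmat e)ᵀ *ᵥ (rvec e - θ • sb))

/-- The control gain `M(e) = s_D² I₃ − s_D S̄ r(e)ᵀ (Dᵀ + D) + s_N S̄ S̄ᵀ D`. -/
def Mmat (sb : Fin 3 → ℝ) (e : Fin 3 → E2) : Matrix (Fin 3) (Fin 3) ℝ :=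
  (sD sb e) ^ 2 • (1 : Matrix (Fin 3) (Fin 3) ℝ)
    - (sD sb e) • (vecMulVec sb (rvec e) * ((Dmat sb)ᵀ + Dmat sb))
    + (sN sb e) • (vecMulVec sb sb * Dmat sb)

/-- `N(e) = (1/s_D²)(s_D Λ(e)(Dᵀ + D) r(e) − s_N Λ(e) Dᵀ S̄) ∈ ℝ⁶`,
the gradient of the scale function `s̃*`. -/
def Nvec (sb : Fin 3 → ℝ) (e : Fin 3 → E2) : Fin 3 × Fin 2 → ℝ :=
  (1 / (sD sb e) ^ 2) •
    ((sD sb e) • (Lam e *ᵥ (((Dmat sb)ᵀ + Dmat sb) *ᵥ rvec e))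
      - (sN sb e) • (Lam e *ᵥ ((Dmat sb)ᵀ *ᵥ sb)))

end

lemma normsq (x : E2) : ‖x‖^2 = x 0 ^ 2 + x 1 ^ 2 := by
  rw [EuclideanSpace.norm_eq, Real.sq_sqrt (by positivity)]
  simp [Fin.sum_univ_succ, sq_abs]

/-- For a non-collinear closed triangle and a shape `S̄` with
positive entries, `s_D(e) = S̄ᵀ D r(e) = ‖R(e)ᵀ S̄‖² > 0`. -/
theorem sD_eq_norm_sq_and_pos (e : Fin 3 → E2) (hsum : e 0 + e 1 + e 2 = 0)
    (hind : LinearIndependent ℝ ![e 0, e 1])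
    (sb : Fin 3 → ℝ) (hsb : ∀ i, 0 < sb i) :
    sD sb e = ((Rmat e)ᵀ *ᵥ sb) ⬝ᵥ ((Rmat e)ᵀ *ᵥ sb) ∧ 0 < sD sb e := by
  have h2 : ∀ i : Fin 2, e 2 i = -(e 0 i + e 1 i) := by
    intro i
    have := congrArg (fun v : E2 => v i) hsum
    simp only [PiLp.add_apply, PiLp.zero_apply] at this
    linarith
  have heq : sD sb e = ((Rmat e)ᵀ *ᵥ sb) ⬝ᵥ ((Rmat e)ᵀ *ᵥ sb) := by
    simp only [sD, Rmat, rvec, dotProduct, mulVec, transpose_apply, Matrix.mul_apply,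
      Fintype.sum_prod_type, Fin.sum_univ_three, Fin.sum_univ_two, Lam, Hhat, Hmat,
      kroneckerMap, Dmat, of_apply, cons_val', cons_val_zero, cons_val_one, head_cons,
      head_fin_const, empty_val', cons_val_fin_one, cons_val_two, tail_cons,
      Matrix.one_apply, normsq, h2]
    norm_num [Fin.ext_iff]
    ring
  refine ⟨heq, ?_⟩
  have hkey : sD sb e =
      ((sb 0 + sb 2) * e 0 0 + sb 2 * e 1 0) ^ 2
      + ((sb 0 + sb 2) * e 0 1 + sb 2 * e 1 1) ^ 2
      + (sb 0 * e 0 0 - sb 1 * e 1 0) ^ 2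
      + (sb 0 * e 0 1 - sb 1 * e 1 1) ^ 2
      + (sb 2 * e 0 0 + (sb 1 + sb 2) * e 1 0) ^ 2
      + (sb 2 * e 0 1 + (sb 1 + sb 2) * e 1 1) ^ 2 := by
    simp only [sD, rvec, dotProduct, mulVec, Fin.sum_univ_three, Dmat, of_apply,
      cons_val', cons_val_zero, cons_val_one, head_cons, empty_val', cons_val_fin_one,
      cons_val_two, tail_cons, head_fin_const, vecHead, vecTail, normsq, h2]
    norm_num
    ring
  have hB1 : sb 0 * e 0 0 - sb 1 * e 1 0 = 0 ∨ 0 < sD sb e := by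
    rcases lt_or_ge 0 (sD sb e) with h | h
    · exact Or.inr h
    · left; nlinarith [sq_nonneg ((sb 0 + sb 2) * e 0 0 + sb 2 * e 1 0),
        sq_nonneg ((sb 0 + sb 2) * e 0 1 + sb 2 * e 1 1),
        sq_nonneg (sb 0 * e 0 1 - sb 1 * e 1 1),
        sq_nonneg (sb 2 * e 0 0 + (sb 1 + sb 2) * e 1 0),
        sq_nonneg (sb 2 * e 0 1 + (sb 1 + sb 2) * e 1 1),
        sq_nonneg (sb 0 * e 0 0 - sb 1 * e 1 0)]
  have hB2 : sb 0 * e 0 1 - sb 1 * e 1 1 = 0 ∨ 0 < sD sb e := by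
    rcases lt_or_ge 0 (sD sb e) with h | h
    · exact Or.inr h
    · left; nlinarith [sq_nonneg ((sb 0 + sb 2) * e 0 0 + sb 2 * e 1 0),
        sq_nonneg ((sb 0 + sb 2) * e 0 1 + sb 2 * e 1 1),
        sq_nonneg (sb 0 * e 0 1 - sb 1 * e 1 1),
        sq_nonneg (sb 2 * e 0 0 + (sb 1 + sb 2) * e 1 0),
        sq_nonneg (sb 2 * e 0 1 + (sb 1 + sb 2) * e 1 1),
        sq_nonneg (sb 0 * e 0 0 - sb 1 * e 1 0)]
  rcases hB1 with hB1 | h; swap; · exact h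
  rcases hB2 with hB2 | h; swap; · exact h
  exfalso
  have hz : sb 0 • e 0 + (-(sb 1)) • e 1 = 0 := by
    ext i
    fin_cases i <;>
      simp only [PiLp.add_apply, PiLp.smul_apply, PiLp.zero_apply, smul_eq_mul, Fin.mk_zero, Fin.mk_one] <;>
      linarith
  have := (LinearIndependent.pair_iff.mp hind (sb 0) (-(sb 1)) hz).1
  exact absurd this (ne_of_gt (hsb 0))
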